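/- Let X, Y, U : ℕ → (real m×n matrices) be sequences satisfying U(k+1) = U(k) + X(k+1) − Y(k+1) for all k, and suppose U(k) converges. Let g be a continuous function from real m×n matrices to ℝ with g(Y(k)) ≤ 0 for all k, and let K be a positive integer with rank(X(k)) ≤ K for all k. If X(k) converges to a matrix X*, then g(X*) ≤ 0 and rank(X*) ≤ K; that is, X* is a feasible point of the problem RLRA. -/

import Mathlib

open Matrix Filter

/-- Frobenius norm of a real matrix. -/
noncomputable def frob {m n : ℕ} (M : Matrix (Fin m) (Fin n) ℝ) : ℝ :=
  Real.sqrt (∑ i, ∑ j, (M i j) ^ 2)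

lemma abs_entry_le_frob {m n : ℕ} (M : Matrix (Fin m) (Fin n) ℝ) (i : Fin m) (j : Fin n) :
    |M i j| ≤ frob M := by
  have h1 : (M i j) ^ 2 ≤ ∑ i', ∑ j', (M i' j') ^ 2 := by
    calc (M i j) ^ 2 ≤ ∑ j', (M i j') ^ 2 :=
          Finset.single_le_sum (fun j' _ => sq_nonneg (M i j')) (Finset.mem_univ j)
      _ ≤ ∑ i', ∑ j', (M i' j') ^ 2 :=
          Finset.single_le_sum (f := fun i' => ∑ j', (M i' j') ^ 2)
            (fun i' _ => Finset.sum_nonneg fun j' _ => sq_nonneg _) (Finset.mem_univ i)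
  calc |M i j| = Real.sqrt ((M i j) ^ 2) := (Real.sqrt_sq_eq_abs _).symm
    _ ≤ frob M := Real.sqrt_le_sqrt h1

lemma tendsto_of_frob_tendsto {m n : ℕ} (A : ℕ → Matrix (Fin m) (Fin n) ℝ)
    (L : Matrix (Fin m) (Fin n) ℝ)
    (h : Tendsto (fun k => frob (A k - L)) atTop (nhds 0)) :
    Tendsto A atTop (nhds L) := by
  refine tendsto_pi_nhds.mpr ?_
  intro i
  rw [tendsto_pi_nhds]
  intro j
  have hsq : Tendsto (fun k => A k i j - L i j) atTop (nhds 0) := by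
    apply squeeze_zero_norm (fun k => ?_) h
    simpa using abs_entry_le_frob (A k - L) i j
  have := hsq.add_const (L i j)
  simpa using this

/-- Feasibility of the limit: if the ADMM dual variable converges, every `Y(k)`
satisfies the convex constraint `g ≤ 0`, every `X(k)` satisfies the rank
constraint, and `X(k)` converges to `X*`, then `X*` is feasible for RLRA, i.e.
`g X* ≤ 0` and `rank X* ≤ K`. -/
theorem admm_limit_feasible {m n : ℕ}
    (X Y U : ℕ → Matrix (Fin m) (Fin n) ℝ)
    (hU : ∀ k, U (k + 1) = U k + X (k + 1) - Y (k + 1))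
    (hUconv : ∃ L : Matrix (Fin m) (Fin n) ℝ,
      Tendsto (fun k => frob (U k - L)) atTop (nhds 0))
    (g : Matrix (Fin m) (Fin n) ℝ → ℝ) (hg : Continuous g)
    (hgY : ∀ k, g (Y k) ≤ 0)
    (K : ℕ) (hK : 0 < K) (hrank : ∀ k, (X k).rank ≤ K)
    (Xstar : Matrix (Fin m) (Fin n) ℝ)
    (hXconv : Tendsto (fun k => frob (X k - Xstar)) atTop (nhds 0)) :
    g Xstar ≤ 0 ∧ Xstar.rank ≤ K := by
  classical
  obtain ⟨L, hL⟩ := hUconv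
  have hX : Tendsto X atTop (nhds Xstar) := tendsto_of_frob_tendsto X Xstar hXconv
  have hUt : Tendsto U atTop (nhds L) := tendsto_of_frob_tendsto U L hL
  have hYeq : ∀ k, Y (k + 1) = U k + X (k + 1) - U (k + 1) := by
    intro k; rw [hU k]; abel
  have hXs : Tendsto (fun k => X (k + 1)) atTop (nhds Xstar) :=
    hX.comp (tendsto_add_atTop_nat 1)
  have hUs : Tendsto (fun k => U (k + 1)) atTop (nhds L) :=
    hUt.comp (tendsto_add_atTop_nat 1)
  have hYshift : Tendsto (fun k => Y (k + 1)) atTop (nhds Xstar) := by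
    have h1 : Tendsto (fun k => U k + X (k + 1) - U (k + 1)) atTop (nhds (L + Xstar - L)) :=
      (hUt.add hXs).sub hUs
    have heq : (fun k => Y (k + 1)) = fun k => U k + X (k + 1) - U (k + 1) :=
      funext fun k => hYeq k
    rw [heq]
    simpa using h1
  have hYt : Tendsto Y atTop (nhds Xstar) := (tendsto_add_atTop_iff_nat 1).mp hYshift
  refine ⟨le_of_tendsto ((hg.tendsto Xstar).comp hYt) (Eventually.of_forall hgY), ?_⟩
  -- rank part
  by_contra hcon
  push_neg at hcon
  have hKr : K + 1 ≤ Xstar.rank := hcon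
  obtain ⟨b, hbt, hspan, hbind⟩ := exists_linearIndependent ℝ (Set.range Xstarᵀ)
  have hbfin : b.Finite := (Set.finite_range Xstarᵀ).subset hbt
  haveI : Fintype b := hbfin.fintype
  have hcard : K + 1 ≤ Fintype.card b := by
    have h1 : Xstar.rank = Module.finrank ℝ (Submodule.span ℝ (Set.range Xstarᵀ)) :=
      Xstar.rank_eq_finrank_span_cols
    have h2 : Module.finrank ℝ (Submodule.span ℝ b) = b.toFinset.card :=
      finrank_span_set_eq_card hbind
    have h3 : b.toFinset.card = Fintype.card b := Set.toFinset_card b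
    rw [h1, ← hspan, h2, h3] at hKr
    exact hKr
  obtain ⟨f⟩ : Nonempty (Fin (K + 1) ↪ b) := by
    apply Function.Embedding.nonempty_of_card_le
    simpa using hcard
  choose c hc using fun j : Fin (K + 1) => hbt (f j).2
  -- the rows of `Xstarᵀ.submatrix c id` are linearly independent
  have hBlin : LinearIndependent ℝ (Xstarᵀ.submatrix c id) := by
    have h1 : LinearIndependent ℝ (fun j : Fin (K + 1) => ((f j : b) : Fin m → ℝ)) :=
      hbind.comp f f.injective
    have h2 : (Xstarᵀ.submatrix c id) = fun j : Fin (K + 1) => ((f j : b) : Fin m → ℝ) := by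
      funext j
      exact hc j
    rw [h2]
    exact h1
  -- the Gram determinant of these columns is nonzero
  have hdet : (Xstarᵀ.submatrix c id * (Xstarᵀ.submatrix c id)ᵀ).det ≠ 0 := by
    intro h0
    obtain ⟨v, hv, hGv⟩ := (Matrix.exists_mulVec_eq_zero_iff).mpr h0
    set B := Xstarᵀ.submatrix c id with hB
    have hw : (v ᵥ* B) ⬝ᵥ (v ᵥ* B) = 0 := by
      have h1 : v ⬝ᵥ ((B * Bᵀ) *ᵥ v) = 0 := by rw [hGv, dotProduct_zero]
      rw [← mulVec_mulVec, dotProduct_mulVec, mulVec_transpose] at h1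
      exact h1
    have hw0 : v ᵥ* B = 0 := dotProduct_self_eq_zero.mp hw
    have hsum : ∑ j, v j • B j = 0 := by
      funext i
      have := congrFun hw0 i
      simpa [vecMul, dotProduct, Finset.sum_apply] using this
    exact hv (funext fun j => Fintype.linearIndependent_iff.mp hBlin v hsum j)
  -- continuity of the Gram determinant
  have hFcont : Continuous (fun M : Matrix (Fin m) (Fin n) ℝ =>
      (Mᵀ.submatrix c id * (Mᵀ.submatrix c id)ᵀ).det) := by
    have hsub : Continuous (fun M : Matrix (Fin m) (Fin n) ℝ => Mᵀ.submatrix c id) :=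
      (continuous_id.matrix_transpose).matrix_submatrix c id
    exact (hsub.matrix_mul hsub.matrix_transpose).matrix_det
  have htend : Tendsto (fun k => ((X k)ᵀ.submatrix c id * ((X k)ᵀ.submatrix c id)ᵀ).det)
      atTop (nhds ((Xstarᵀ.submatrix c id * (Xstarᵀ.submatrix c id)ᵀ).det)) :=
    (hFcont.tendsto Xstar).comp hX
  obtain ⟨k, hk⟩ := (htend.eventually_ne hdet).exists
  -- the Gram matrix of columns of X k is invertible, contradicting rank X k ≤ K
  have hunit : IsUnit ((X k)ᵀ.submatrix c id * ((X k)ᵀ.submatrix c id)ᵀ) :=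
    (Matrix.isUnit_iff_isUnit_det _).mpr (isUnit_iff_ne_zero.mpr hk)
  have h1 : ((X k)ᵀ.submatrix c id * ((X k)ᵀ.submatrix c id)ᵀ).rank = K + 1 := by
    rw [Matrix.rank_of_isUnit _ hunit, Fintype.card_fin]
  have h2 : ((X k)ᵀ.submatrix c id * ((X k)ᵀ.submatrix c id)ᵀ).rank
      ≤ (((X k)ᵀ.submatrix c id)ᵀ).rank := Matrix.rank_mul_le_right _ _
  have h3 : (((X k)ᵀ.submatrix c id)ᵀ) = (X k).submatrix id c := by
    rw [transpose_submatrix, transpose_transpose]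
  have h4 : (X k).submatrix id c
      = X k * (1 : Matrix (Fin n) (Fin n) ℝ).submatrix (Equiv.refl (Fin n)) c := by
    rw [Matrix.mul_submatrix_one]
    rfl
  have h5 : ((X k).submatrix id c).rank ≤ (X k).rank := by
    rw [h4]
    exact Matrix.rank_mul_le_left _ _
  have h6 : K + 1 ≤ ((X k).submatrix id c).rank := by
    rw [← h3]
    exact h1.symm.trans_le h2
  have h7 := hrank k
  omega
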